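/- Total variation separation for the Bernoulli product construction: Let d ≥ 1000 be an integer and let 0 < α < 0.01. For each sign vector e ∈ {−1,+1}^d define the Bernoulli product distribution p_e = ℬ(μ^e₁) × ⋯ × ℬ(μ^e_d) on {0,1}^d, where μ^e_i = (1 + 20·α·e_i)/d. Then for all u, v ∈ {−1,+1}^d, d_TV(p_u, p_v) ≥ (5α/d)·Σ_{i=1}^d 1{u_i ≠ v_i}. -/

import Mathlib

open MeasureTheory ENNReal

/-- Hamming distance between two vectors. -/
noncomputable def ham {𝒳 : Type*} {n : ℕ} (x y : Fin n → 𝒳) : ℕ :=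
  letI : DecidableEq 𝒳 := Classical.decEq 𝒳
  (Finset.univ.filter fun i => x i ≠ y i).card

/-- Total variation distance: `sup_A (p(A) - q(A))` over measurable sets `A`. -/
noncomputable def tvDist {Ω : Type*} [MeasurableSpace Ω] (p q : Measure Ω) : ℝ :=
  ⨆ S : {S : Set Ω // MeasurableSet S}, ((p S).toReal - (q S).toReal)

/-- The Bernoulli distribution `ℬ(t)` on `{0,1}` (encoded by `Bool`) with mean `t`. -/
noncomputable def bern (t : ℝ) : Measure Bool :=
  ENNReal.ofReal t • Measure.dirac true + ENNReal.ofReal (1 - t) • Measure.dirac false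

/-- The sign `±1` encoded by a boolean (`true = +1`, `false = −1`). -/
def sign (b : Bool) : ℝ := if b then 1 else -1

noncomputable def assouadBernProd (d : ℕ) (α : ℝ) (e : Fin d → Bool) :
    Measure (Fin d → Bool) :=
  Measure.pi fun i => bern ((1 + 20 * α * sign (e i)) / d)

lemma sign_true : sign true = 1 := rfl
lemma sign_false : sign false = -1 := rfl

instance (t : ℝ) : IsFiniteMeasure (bern t) := by
  constructor; simp [bern]

lemma bern_false (t : ℝ) : bern t {false} = ENNReal.ofReal (1 - t) := by simp [bern]

lemma bern_univ (t : ℝ) (h0 : 0 ≤ t) (h1 : t ≤ 1) : bern t Set.univ = 1 := by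
  simp [bern]
  rw [← ENNReal.ofReal_add h0 (by linarith)]
  norm_num

lemma quarter (d : ℕ) (hd : 1000 ≤ d) : (1/4 : ℝ) ≤ (1 - 1.2/(d:ℝ))^d := by
  have hd' : (1000:ℝ) ≤ d := by exact_mod_cast hd
  have hd0 : (0:ℝ) < d := by linarith
  set x : ℝ := 1.2 / d with hx
  have hx0 : 0 < x := by positivity
  have hx1 : x ≤ 1.2/1000 := by
    rw [hx]; apply div_le_div_of_nonneg_left (by norm_num) (by norm_num) hd'
  have h1 : (1+x)^d ≤ Real.exp 1.2 := by
    calc (1+x)^d ≤ (Real.exp x)^d := by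
          apply pow_le_pow_left₀ (by linarith) (by linarith [Real.add_one_le_exp x])
    _ = Real.exp (d * x) := by rw [← Real.exp_nat_mul]
    _ ≤ Real.exp 1.2 := by
        apply Real.exp_le_exp.mpr
        rw [hx]; field_simp; norm_num
  have h2 : Real.exp 1.2 ≤ 3.814697265625 := by
    have e02 : Real.exp 0.2 ≤ 1.25 := by
      have h := Real.add_one_le_exp (-0.2:ℝ)
      rw [Real.exp_neg] at h
      have hp := Real.exp_pos (0.2:ℝ)
      have hc : Real.exp 0.2 * (Real.exp 0.2)⁻¹ = 1 := mul_inv_cancel₀ hp.ne'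
      nlinarith
    calc Real.exp 1.2 = (Real.exp 0.2)^6 := by
          rw [← Real.exp_nat_mul]; norm_num
    _ ≤ (1.25:ℝ)^6 := pow_le_pow_left₀ (Real.exp_pos _).le e02 6
    _ = 3.814697265625 := by norm_num
  have h3 : 1 - (d:ℝ)*x^2 ≤ (1-x^2)^d := by
    have h := one_add_mul_le_pow (a := -x^2) (by nlinarith) d
    have e1 : (1 + -x^2) = 1 - x^2 := by ring
    have e2 : 1 + (d:ℝ) * -x^2 = 1 - d*x^2 := by ring
    rw [e1, e2] at h; exact h
  have hdx2 : (d:ℝ)*x^2 ≤ 0.00144 := by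
    have hxe : (d:ℝ)*x^2 = 1.44/d := by rw [hx]; field_simp; ring
    rw [hxe, div_le_iff₀ hd0]; linarith
  have hprod : (1-x)^d * (1+x)^d = (1-x^2)^d := by
    rw [← mul_pow]; congr 1; ring
  have hQpos : (0:ℝ) < (1+x)^d := by positivity
  nlinarith [pow_nonneg (by linarith : (0:ℝ) ≤ 1-x) d]

lemma geom_lb (n : ℕ) (s t : ℝ) (hs : 0 ≤ s) (hst : s ≤ t) :
    (t - s) * n * s ^ (n - 1) ≤ t ^ n - s ^ n := by
  rw [← geom_sum₂_mul]
  have h : ∀ i ∈ Finset.range n, s ^ (n-1) ≤ t ^ i * s ^ (n - 1 - i) := by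
    intro i hi
    calc s ^ (n-1) = s ^ i * s ^ (n-1-i) := by
          rw [← pow_add]; congr 1; have := Finset.mem_range.mp hi; omega
    _ ≤ t ^ i * s ^ (n-1-i) := by
        apply mul_le_mul_of_nonneg_right (pow_le_pow_left₀ hs hst i) (pow_nonneg hs _)
  have hsum := Finset.sum_le_sum h
  simp at hsum
  have hts : 0 ≤ t - s := by linarith
  nlinarith [pow_nonneg hs (n-1)]

lemma cylinder (d : ℕ) (α : ℝ) (e : Fin d → Bool) (S : Finset (Fin d))
    (hμ : ∀ i, 0 ≤ (1 + 20 * α * sign (e i)) / d ∧ (1 + 20 * α * sign (e i)) / d ≤ 1) :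
    (assouadBernProd d α e) (Set.pi Set.univ fun i => if i ∈ S then {false} else Set.univ)
      = ∏ i ∈ S, ENNReal.ofReal (1 - (1 + 20 * α * sign (e i)) / d) := by
  rw [assouadBernProd, Measure.pi_pi]
  rw [← Finset.prod_filter_mul_prod_filter_not Finset.univ (· ∈ S)]
  have h1 : ∀ i ∈ Finset.univ.filter (· ∈ S),
      bern ((1 + 20 * α * sign (e i)) / d) (if i ∈ S then {false} else Set.univ)
        = ENNReal.ofReal (1 - (1 + 20 * α * sign (e i)) / d) := by
    intro i hi
    simp only [Finset.mem_filter] at hi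
    rw [if_pos hi.2, bern_false]
  have h2 : ∀ i ∈ Finset.univ.filter (¬ · ∈ S),
      bern ((1 + 20 * α * sign (e i)) / d) (if i ∈ S then {false} else Set.univ) = 1 := by
    intro i hi
    simp only [Finset.mem_filter] at hi
    rw [if_neg hi.2, bern_univ _ (hμ i).1 (hμ i).2]
  rw [Finset.prod_congr rfl h1, Finset.prod_congr rfl h2, Finset.prod_const_one, mul_one]
  congr 1
  ext i; simp

lemma prod_univ_one (d : ℕ) (α : ℝ) (e : Fin d → Bool)
    (hμ : ∀ i, 0 ≤ (1 + 20 * α * sign (e i)) / d ∧ (1 + 20 * α * sign (e i)) / d ≤ 1) :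
    (assouadBernProd d α e) Set.univ = 1 := by
  rw [assouadBernProd, Measure.pi_univ]
  have : ∀ i ∈ Finset.univ, bern ((1 + 20 * α * sign (e i)) / d) Set.univ = 1 := by
    intro i _
    exact bern_univ _ (hμ i).1 (hμ i).2
  rw [Finset.prod_congr rfl this, Finset.prod_const_one]

lemma cyl_measurable {d : ℕ} (S : Finset (Fin d)) :
    MeasurableSet (Set.pi Set.univ fun i => if i ∈ S then ({false} : Set Bool) else Set.univ) := by
  apply MeasurableSet.univ_pi
  intro i
  split
  · exact measurableSet_singleton _
  · exact MeasurableSet.univ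

lemma tv_ge {Ω : Type*} [MeasurableSpace Ω] (p q : Measure Ω)
    (hp : p Set.univ = 1) (A : Set Ω) (hA : MeasurableSet A) :
    (p A).toReal - (q A).toReal ≤ tvDist p q := by
  have hb : BddAbove (Set.range fun S : {S : Set Ω // MeasurableSet S} =>
      ((p S).toReal - (q S).toReal)) := by
    refine ⟨1, ?_⟩
    rintro x ⟨S, rfl⟩
    have h1 : p S ≤ 1 := by rw [← hp]; exact measure_mono (Set.subset_univ _)
    have h2 : (p S).toReal ≤ 1 := by
      have := ENNReal.toReal_mono one_ne_top h1
      simpa using this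
    have h3 : 0 ≤ (q S).toReal := ENNReal.toReal_nonneg
    simp only []
    linarith
  exact le_ciSup hb ⟨A, hA⟩

set_option maxHeartbeats 1000000 in
/-- Total variation separation for the Bernoulli product construction: for `d ≥ 1000` and
`0 < α < 0.01`, `d_TV(p_u, p_v) ≥ (5α/d) · Σ_i 1{u_i ≠ v_i}` for all sign vectors `u, v`. -/
theorem bernoulli_product_tv_separation (d : ℕ) (hd : 1000 ≤ d)
    (α : ℝ) (hα : 0 < α) (hα' : α < 0.01) (u v : Fin d → Bool) :
    5 * α / d * (ham u v : ℝ) ≤ tvDist (assouadBernProd d α u) (assouadBernProd d α v) := by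
  classical
  have hd' : (1000:ℝ) ≤ d := by exact_mod_cast hd
  have hd0 : (0:ℝ) < d := by linarith
  have hμ : ∀ (e : Fin d → Bool) (i : Fin d),
      0 ≤ (1 + 20 * α * sign (e i)) / d ∧ (1 + 20 * α * sign (e i)) / d ≤ 1 := by
    intro e i
    have hs : sign (e i) = 1 ∨ sign (e i) = -1 := by
      cases e i
      · right; exact sign_false
      · left; exact sign_true
    constructor
    · apply div_nonneg _ hd0.le
      rcases hs with h | h <;> rw [h] <;> nlinarith
    · rw [div_le_one hd0]
      rcases hs with h | h <;> rw [h] <;> nlinarith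
  set A : ℝ := (1 + 20*α)/d with hA
  set B : ℝ := (1 - 20*α)/d with hB
  set s : ℝ := 1 - A with hsdef
  set t : ℝ := 1 - B with htdef
  have h12 : 1.2/(d:ℝ) ≤ 1 := by
    rw [div_le_one hd0]; linarith
  have hA1 : A ≤ 1.2/d := by
    rw [hA, div_le_div_iff_of_pos_right hd0]; linarith
  have hApos : 0 < A := by rw [hA]; positivity
  have hBpos : 0 < B := by rw [hB]; apply div_pos (by linarith) hd0
  have hBA : B ≤ A := by
    rw [hA, hB, div_le_div_iff_of_pos_right hd0]; linarith
  have hs0 : 0 ≤ s := by rw [hsdef]; linarith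
  have hst : s ≤ t := by rw [hsdef, htdef]; linarith
  have ht1 : t ≤ 1 := by rw [htdef]; linarith
  have hts : t - s = 40*α/d := by rw [hsdef, htdef, hA, hB]; field_simp; ring
  have hq : ∀ n : ℕ, n ≤ d → (1/4:ℝ) ≤ s ^ n := by
    intro n hn
    calc (1/4:ℝ) ≤ (1 - 1.2/d)^d := quarter d hd
    _ ≤ s ^ d := pow_le_pow_left₀ (by linarith) (by rw [hsdef]; linarith) d
    _ ≤ s ^ n := pow_le_pow_of_le_one hs0 (by linarith) hn
  set D : Finset (Fin d) := Finset.univ.filter (fun i => u i ≠ v i) with hD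
  have hham : (ham u v : ℝ) = (D.card : ℝ) := by
    rw [ham, hD]
    congr!
  set Dp : Finset (Fin d) := D.filter (fun i => u i = true) with hDp
  set Dm : Finset (Fin d) := D.filter (fun i => u i = false) with hDm
  have hcard : D.card = Dp.card + Dm.card := by
    have hDm' : Dm = D.filter (fun i => ¬ u i = true) := by
      rw [hDm]
      apply Finset.filter_congr
      intro i _
      cases u i <;> simp
    rw [hDp, hDm', Finset.card_filter_add_card_filter_not]
  have hcardle : ∀ S : Finset (Fin d), S.card ≤ d := fun S => by
    simpa using Finset.card_le_card (Finset.subset_univ S)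
  have main : ∀ (S : Finset (Fin d)) (c : Bool), (∀ i ∈ S, u i = c ∧ u i ≠ v i) →
      D.card ≤ 2 * S.card →
      5 * α / d * D.card ≤ tvDist (assouadBernProd d α u) (assouadBernProd d α v) := by
    intro S c hS hle
    set M := S.card with hM
    set Cyl : Set (Fin d → Bool) :=
      Set.pi Set.univ fun i => if i ∈ S then {false} else Set.univ with hCyl
    have hcs : 0 ≤ (cond c s t) := by cases c <;> simp <;> linarith
    have hct : 0 ≤ (cond c t s) := by cases c <;> simp <;> linarith
    have hu : ((assouadBernProd d α u) Cyl).toReal = (cond c s t) ^ M := by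
      rw [hCyl, cylinder d α u S (hμ u)]
      have hterm : ∀ i ∈ S, ENNReal.ofReal (1 - (1 + 20 * α * sign (u i)) / d)
          = ENNReal.ofReal (cond c s t) := by
        intro i hi
        rw [(hS i hi).1]
        cases c
        · rw [sign_false]
          simp only [Bool.cond_false]
          congr 1
          rw [htdef, hB]; ring
        · rw [sign_true]
          simp only [Bool.cond_true]
          congr 1
          rw [hsdef, hA]; ring
      rw [Finset.prod_congr rfl hterm, Finset.prod_const, ← ENNReal.ofReal_pow hcs,
        ENNReal.toReal_ofReal (pow_nonneg hcs M)]
    have hv : ((assouadBernProd d α v) Cyl).toReal = (cond c t s) ^ M := by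
      rw [hCyl, cylinder d α v S (hμ v)]
      have hterm : ∀ i ∈ S, ENNReal.ofReal (1 - (1 + 20 * α * sign (v i)) / d)
          = ENNReal.ofReal (cond c t s) := by
        intro i hi
        have hvi : v i = !c := by
          have h1 := (hS i hi).1
          have h2 := (hS i hi).2
          cases hvv : v i <;> cases c <;> simp_all
        rw [hvi]
        cases c
        · rw [show sign (!false) = 1 from rfl]
          simp only [Bool.cond_false]
          congr 1
          rw [hsdef, hA]; ring
        · rw [show sign (!true) = -1 from rfl]
          simp only [Bool.cond_true]
          congr 1
          rw [htdef, hB]; ring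
      rw [Finset.prod_congr rfl hterm, Finset.prod_const, ← ENNReal.ofReal_pow hct,
        ENNReal.toReal_ofReal (pow_nonneg hct M)]
    have hnum : 5 * α / d * D.card ≤ t ^ M - s ^ M := by
      have h1 := geom_lb M s t hs0 hst
      have h2 : (1/4:ℝ) ≤ s ^ (M-1) := hq (M-1) (by have := hcardle S; omega)
      have h3 : (40*α/d) * M * (1/4) ≤ (t - s) * M * s^(M-1) := by
        rw [hts]
        apply mul_le_mul_of_nonneg_left h2
        positivity
      have h4 : (D.card : ℝ) ≤ 2 * M := by exact_mod_cast hle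
      calc 5 * α / d * D.card ≤ 5 * α / d * (2 * M) := by
            apply mul_le_mul_of_nonneg_left h4 (by positivity)
      _ = (40*α/d) * M * (1/4) := by ring
      _ ≤ (t - s) * M * s^(M-1) := h3
      _ ≤ t ^ M - s ^ M := h1
    have huniv_u := prod_univ_one d α u (hμ u)
    have huniv_v := prod_univ_one d α v (hμ v)
    cases c with
    | false =>
      have htv := tv_ge (assouadBernProd d α u) (assouadBernProd d α v)
        huniv_u Cyl (cyl_measurable S)
      simp only [Bool.cond_false] at hu hv
      rw [hu, hv] at htv
      linarith
    | true =>
      have hfin_u : (assouadBernProd d α u) Cyl ≤ 1 := by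
        rw [← huniv_u]; exact measure_mono (Set.subset_univ _)
      have hfin_v : (assouadBernProd d α v) Cyl ≤ 1 := by
        rw [← huniv_v]; exact measure_mono (Set.subset_univ _)
      have htv := tv_ge (assouadBernProd d α u) (assouadBernProd d α v)
        huniv_u Cylᶜ (cyl_measurable S).compl
      simp only [Bool.cond_true] at hu hv
      have hcu : ((assouadBernProd d α u) Cylᶜ).toReal = 1 - s ^ M := by
        rw [measure_compl (cyl_measurable S) (lt_of_le_of_lt hfin_u one_lt_top).ne,
          huniv_u, ENNReal.toReal_sub_of_le hfin_u one_ne_top, hu, ENNReal.toReal_one]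
      have hcv : ((assouadBernProd d α v) Cylᶜ).toReal = 1 - t ^ M := by
        rw [measure_compl (cyl_measurable S) (lt_of_le_of_lt hfin_v one_lt_top).ne,
          huniv_v, ENNReal.toReal_sub_of_le hfin_v one_ne_top, hv, ENNReal.toReal_one]
      rw [hcu, hcv] at htv
      linarith
  rw [hham]
  by_cases hc : Dp.card ≤ Dm.card
  · apply main Dm false
    · intro i hi
      rw [hDm, Finset.mem_filter, hD, Finset.mem_filter] at hi
      exact ⟨hi.2, hi.1.2⟩
    · omega
  · apply main Dp true
    · intro i hi
      rw [hDp, Finset.mem_filter, hD, Finset.mem_filter] at hi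
      exact ⟨hi.2, hi.1.2⟩
    · omega
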